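/- For every n ≥ 1 and r > 0, there exists a constant v_n(r) > 0 such that for every properly convex open subset Ω of P^n and every x ∈ Ω, the Busemann volume of the Hilbert-metric ball of radius r centered at x satisfies Vol_Ω(B_Ω(x,r)) ≥ v_n(r). -/

import Mathlib

open Set Filter MeasureTheory Bornology Pointwise

/-- The Funk (asymmetric) distance of a convex set `S` in a real vector space,
expressed through the Minkowski gauge: `F(x,y) = - log (1 - gauge_{S-x}(y-x))`. -/
noncomputable def funkDist {E : Type*} [AddCommGroup E] [Module ℝ E] (S : Set E) (x y : E) : ℝ :=
  - Real.log (1 - gauge ((fun z => z - x) '' S) (y - x))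

/-- The Hilbert (cross-ratio) distance of a convex set `S`:
`d_S(x,y) = (1/2) log ([p:x:y:q])`, the symmetrization of the Funk distance. -/
noncomputable def hilbertDist {E : Type*} [AddCommGroup E] [Module ℝ E] (S : Set E) (x y : E) : ℝ :=
  (funkDist S x y + funkDist S y x) / 2

/-- A properly convex open subset of `P^n`, viewed in an affine chart:
a nonempty bounded convex open subset of `ℝ^n`. -/
def IsProperlyConvex {E : Type*} [NormedAddCommGroup E] [NormedSpace ℝ E] (S : Set E) : Prop :=
  IsOpen S ∧ Convex ℝ S ∧ Bornology.IsBounded S ∧ S.Nonempty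

/-- The open metric ball of the Hilbert metric of `S`. -/
noncomputable def hilbertBall {E : Type*} [AddCommGroup E] [Module ℝ E]
    (S : Set E) (x : E) (r : ℝ) : Set E :=
  {y ∈ S | hilbertDist S x y < r}

/-- `p` is an extremal point of `∂S`: it is not in the interior of any nontrivial segment
contained in `∂S`. -/
def IsExtremalPoint {E : Type*} [NormedAddCommGroup E] [NormedSpace ℝ E]
    (S : Set E) (p : E) : Prop :=
  p ∈ frontier S ∧ ∀ a ∈ frontier S, ∀ b ∈ frontier S, p ∈ openSegment ℝ a b → a = b

/-- The unit ball `B(T_xΩ)` of the Finsler norm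
`F(x,v) = (|v|/2) (1/|x x⁻| + 1/|x x⁺|) = (gauge_{S-x}(v) + gauge_{S-x}(-v))/2`
of the Hilbert metric of `S` at the point `x`. -/
noncomputable def finslerBall {E : Type*} [AddCommGroup E] [Module ℝ E]
    (S : Set E) (x : E) : Set E :=
  {v | gauge ((fun z => z - x) '' S) v + gauge ((fun z => z - x) '' S) (-v) < 2}

/-- The Busemann density of the Hilbert geometry of `S`:
`dVol_S(x) = v_n / Vol(B(T_xS)) dVol(x)`. -/
noncomputable def busemannDensity {n : ℕ} (S : Set (EuclideanSpace ℝ (Fin n)))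
    (x : EuclideanSpace ℝ (Fin n)) : ENNReal :=
  volume (Metric.ball (0 : EuclideanSpace ℝ (Fin n)) 1) / volume (finslerBall S x)

/-- The Busemann volume of `A` in the Hilbert geometry of `S`. -/
noncomputable def busemannVolume {n : ℕ} (S A : Set (EuclideanSpace ℝ (Fin n))) : ENNReal :=
  ∫⁻ x in A, busemannDensity S x

section Aux

variable {E : Type*} [NormedAddCommGroup E] [NormedSpace ℝ E]

lemma mem_shift {S : Set E} {x w : E} :
    w ∈ (fun z => z - x) '' S ↔ w + x ∈ S := by
  constructor
  · rintro ⟨z, hz, rfl⟩; simpa using hz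
  · intro h; exact ⟨w + x, h, by simp⟩

lemma shift_isOpen {S : Set E} (hS : IsOpen S) (x : E) :
    IsOpen ((fun z => z - x) '' S) := by
  have : (fun z => z - x) '' S = (fun z => z + x) ⁻¹' S := by
    ext w; rw [mem_preimage, mem_shift]
  rw [this]
  exact hS.preimage (continuous_id.add continuous_const)

lemma shift_convex {S : Set E} (hS : Convex ℝ S) (x : E) :
    Convex ℝ ((fun z => z - x) '' S) := by
  have : (fun z : E => z - x) = fun z => (-x) + z := by ext z; abel
  rw [this]
  exact hS.translate _

omit [NormedSpace ℝ E] in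
lemma shift_bounded {S : Set E} (hS : IsBounded S) (x : E) :
    IsBounded ((fun z => z - x) '' S) := by
  have hlip : LipschitzWith 1 (fun z : E => z - x) := by
    intro a b
    simp [edist_sub_right]
  exact hlip.isBounded_image hS

lemma shift_mem_zero {S : Set E} {x : E} (hx : x ∈ S) :
    (0 : E) ∈ (fun z => z - x) '' S := mem_shift.2 (by simpa using hx)

lemma shift_absorbent {S : Set E} (hS : IsOpen S) {x : E} (hx : x ∈ S) :
    Absorbent ℝ ((fun z => z - x) '' S) :=
  absorbent_nhds_zero (((shift_isOpen hS x).mem_nhds (shift_mem_zero hx)))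

lemma mem_of_gauge_lt_one {Ω : Set E} (hΩ : IsProperlyConvex Ω) {x w : E} (hx : x ∈ Ω)
    (h : gauge ((fun z => z - x) '' Ω) w < 1) : w ∈ (fun z => z - x) '' Ω := by
  have := gauge_lt_one_eq_self_of_isOpen (shift_convex hΩ.2.1 x) (shift_mem_zero hx)
    (shift_isOpen hΩ.1 x)
  rw [← this]; exact h

/-- The point `x + ε • u` lies in Ω for `u` in the symmetrized set. -/
lemma pt_mem (hΩ : IsProperlyConvex Ω) {x : E} (hx : x ∈ Ω) {ε : ℝ} (hε : 0 ≤ ε) (hε1 : ε ≤ 1)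
    {u : E} (hu : u ∈ (fun z => z - x) '' Ω) : x + ε • u ∈ Ω := by
  have : ε • u ∈ (fun z => z - x) '' Ω :=
    (shift_convex hΩ.2.1 x).smul_mem_of_zero_mem (shift_mem_zero hx) hu ⟨hε, hε1⟩
  have := mem_shift.1 this
  rwa [add_comm] at this

lemma smul_mem_hilbertBall {Ω : Set E} (hΩ : IsProperlyConvex Ω) {x : E} (hx : x ∈ Ω)
    {r ε : ℝ} (hr : 0 < r) (hε : 0 < ε) (hε4 : ε ≤ 1/4)
    (hεr : ε ≤ (1 - Real.exp (-r))/2) {u : E}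
    (hu : u ∈ (fun z => z - x) '' Ω) (hu' : -u ∈ (fun z => z - x) '' Ω) :
    x + ε • u ∈ hilbertBall Ω x r := by
  set s := (fun z => z - x) '' Ω with hs
  set y := x + ε • u with hy
  have hεle1 : ε ≤ 1 := hε4.trans (by norm_num)
  have hyΩ : y ∈ Ω := pt_mem hΩ hx hε.le hεle1 hu
  set t : ℝ := 1 - Real.exp (-r) with ht
  have htpos : 0 < t := by
    have : Real.exp (-r) < 1 := by
      rw [Real.exp_lt_one_iff]; linarith
    linarith
  have ht1 : t < 1 := by
    have : 0 < Real.exp (-r) := Real.exp_pos _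
    linarith
  -- generic step: gauge value ≤ c < t gives funk < r
  have key : ∀ a b : E, ∀ c : ℝ, 0 ≤ c → c < t →
      gauge ((fun z => z - a) '' Ω) (b - a) ≤ c → funkDist Ω a b < r := by
    intro a b c hc0 hct hg
    have hg0 : 0 ≤ gauge ((fun z => z - a) '' Ω) (b - a) := gauge_nonneg _
    have h1 : Real.exp (-r) < 1 - gauge ((fun z => z - a) '' Ω) (b - a) := by
      have : gauge ((fun z => z - a) '' Ω) (b - a) < t := lt_of_le_of_lt hg hct
      simp only [ht] at this ⊢
      linarith
    have h2 : -r < Real.log (1 - gauge ((fun z => z - a) '' Ω) (b - a)) := by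
      have := Real.log_lt_log (Real.exp_pos (-r)) h1
      rwa [Real.log_exp] at this
    simp only [funkDist]
    linarith
  -- funk x y
  have hguε : gauge s (ε • u) ≤ ε := by
    rw [gauge_smul_of_nonneg hε.le]
    have := gauge_le_one_of_mem hu
    calc ε • gauge s u ≤ ε • 1 := by
          exact smul_le_smul_of_nonneg_left this hε.le
      _ = ε := by simp
  have hf1 : funkDist Ω x y < r := by
    refine key x y ε hε.le (by linarith) ?_
    have : y - x = ε • u := by simp [hy]
    rw [this]; exact hguε
  -- funk y x
  have hf2 : funkDist Ω y x < r := by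
    have hc : (0:ℝ) ≤ ε / (1 - ε) := by
      apply div_nonneg hε.le; linarith
    refine key y x (ε / (1 - ε)) hc ?_ ?_
    · -- ε/(1-ε) < t
      have h34 : (3:ℝ)/4 ≤ 1 - ε := by linarith
      have : ε / (1 - ε) ≤ ε / (3/4) := by
        apply div_le_div_of_nonneg_left hε.le (by norm_num) h34
      have h2 : ε / (3/4) = (4/3) * ε := by ring
      calc ε / (1-ε) ≤ (4/3) * ε := by rw [← h2]; exact this
        _ ≤ (4/3) * (t/2) := by nlinarith
        _ < t := by linarith
    · -- gauge bound
      apply gauge_le_of_mem hc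
      refine ⟨(1 - ε) • (-u), ?_, ?_⟩
      · -- (1-ε)•(-u) ∈ Ω - y
        rw [mem_shift]
        have h0 : (1 - ε) • (-u) + y = x + ((1 : ℝ) - 2*ε) • (-u) := by
          rw [hy]; module
        rw [h0]
        exact pt_mem hΩ hx (by linarith) (by linarith) hu'
      · -- (ε/(1-ε)) • ((1-ε)•(-u)) = x - y
        have h1ε : (1 - ε) ≠ 0 := ne_of_gt (by linarith)
        show (ε / (1 - ε)) • ((1 - ε) • (-u)) = x - y
        rw [smul_smul]
        rw [div_mul_cancel₀ _ h1ε]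
        rw [hy]; module
  refine ⟨hyΩ, ?_⟩
  simp only [hilbertDist]
  linarith

lemma finslerBall_subset {Ω : Set E} (hΩ : IsProperlyConvex Ω) {x : E} (hx : x ∈ Ω)
    {ε : ℝ} (hε : 0 < ε) (hε1 : ε ≤ 1) {u : E}
    (hu : u ∈ (fun z => z - x) '' Ω) (hu' : -u ∈ (fun z => z - x) '' Ω) :
    finslerBall Ω (x + ε • u) ⊆
      (2 + 4*ε) • {w : E | w ∈ (fun z => z - x) '' Ω ∧ -w ∈ (fun z => z - x) '' Ω} := by
  set s := (fun z => z - x) '' Ω with hs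
  set y := x + ε • u with hy
  have hyΩ : y ∈ Ω := pt_mem hΩ hx hε.le hε1 hu
  have hconv : Convex ℝ s := shift_convex hΩ.2.1 x
  have habs : Absorbent ℝ s := shift_absorbent hΩ.1 hx
  -- main estimate
  have key : ∀ w : E, gauge ((fun z => z - y) '' Ω) w < 2 → gauge s w ≤ 2 + 2*ε := by
    intro w hw
    have h2 : gauge ((fun z => z - y) '' Ω) ((1/2 : ℝ) • w) < 1 := by
      rw [gauge_smul_of_nonneg (by norm_num : (0:ℝ) ≤ 1/2)]
      simp only [smul_eq_mul]
      linarith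
    have hmem : ((1/2 : ℝ) • w) ∈ (fun z => z - y) '' Ω := mem_of_gauge_lt_one hΩ hyΩ h2
    have hmem' : ((1/2 : ℝ) • w + ε • u) ∈ s := by
      rw [hs, mem_shift]
      have := mem_shift.1 hmem
      rw [hy] at this
      convert this using 1
      module
    have hεu : gauge s (ε • (-u)) ≤ ε := by
      rw [gauge_smul_of_nonneg hε.le]
      have := gauge_le_one_of_mem hu'
      calc ε • gauge s (-u) ≤ ε • 1 := smul_le_smul_of_nonneg_left this hε.le
        _ = ε := by simp
    have hadd : gauge s ((1/2 : ℝ) • w) ≤ 1 + ε := by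
      have hrw : (1/2 : ℝ) • w = ((1/2 : ℝ) • w + ε • u) + ε • (-u) := by module
      rw [hrw]
      calc gauge s (((1/2 : ℝ) • w + ε • u) + ε • (-u))
          ≤ gauge s ((1/2 : ℝ) • w + ε • u) + gauge s (ε • (-u)) := gauge_add_le hconv habs _ _
        _ ≤ 1 + ε := add_le_add (gauge_le_one_of_mem hmem') hεu
    have hgw : gauge s w = 2 * gauge s ((1/2 : ℝ) • w) := by
      have : w = (2 : ℝ) • ((1/2 : ℝ) • w) := by module
      rw [this, gauge_smul_of_nonneg (by norm_num : (0:ℝ) ≤ 2)]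
      simp [smul_smul]
    rw [hgw]; linarith
  -- conclude
  intro v hv
  simp only [finslerBall, mem_setOf_eq] at hv
  have hg1 : gauge ((fun z => z - y) '' Ω) v < 2 := by
    have := gauge_nonneg (s := (fun z => z - y) '' Ω) (-v); linarith
  have hg2 : gauge ((fun z => z - y) '' Ω) (-v) < 2 := by
    have := gauge_nonneg (s := (fun z => z - y) '' Ω) v; linarith
  have hb1 := key v hg1
  have hb2 := key (-v) hg2
  set K : ℝ := 2 + 4*ε with hK
  have hKpos : 0 < K := by positivity
  have hlt1 : (2 + 2*ε) / K < 1 := (div_lt_one hKpos).2 (by rw [hK]; linarith)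
  have hmemv : K⁻¹ • v ∈ s := by
    apply mem_of_gauge_lt_one hΩ hx
    rw [← hs, gauge_smul_of_nonneg (inv_nonneg.2 hKpos.le)]
    calc K⁻¹ • gauge s v ≤ K⁻¹ • (2 + 2*ε) := smul_le_smul_of_nonneg_left hb1 (inv_nonneg.2 hKpos.le)
      _ = (2 + 2*ε) / K := by rw [smul_eq_mul]; ring
      _ < 1 := hlt1
  have hmemv' : -(K⁻¹ • v) ∈ s := by
    rw [← smul_neg]
    apply mem_of_gauge_lt_one hΩ hx
    rw [← hs, gauge_smul_of_nonneg (inv_nonneg.2 hKpos.le)]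
    calc K⁻¹ • gauge s (-v) ≤ K⁻¹ • (2 + 2*ε) :=
          smul_le_smul_of_nonneg_left hb2 (inv_nonneg.2 hKpos.le)
      _ = (2 + 2*ε) / K := by rw [smul_eq_mul]; ring
      _ < 1 := hlt1
  exact ⟨K⁻¹ • v, ⟨hmemv, hmemv'⟩, by show K • K⁻¹ • v = v; rw [smul_smul, mul_inv_cancel₀ hKpos.ne', one_smul]⟩


end Aux

/-- (Colbois–Vernicos) For every `n ≥ 1` and `r > 0` there is `v_n(r) > 0` such that every
metric ball of radius `r` in every properly convex open `Ω ⊆ P^n` has Busemann volume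
at least `v_n(r)`. -/
theorem exists_uniform_lower_bound_volume_ball (n : ℕ) (hn : 1 ≤ n) (r : ℝ) (hr : 0 < r) :
    ∃ v : ℝ, 0 < v ∧ ∀ Ω : Set (EuclideanSpace ℝ (Fin n)), IsProperlyConvex Ω →
      ∀ x ∈ Ω, ENNReal.ofReal v ≤ busemannVolume Ω (hilbertBall Ω x r) := by
  classical
  set ε : ℝ := min (1/4) ((1 - Real.exp (-r))/2) with hεdef
  have hexp : Real.exp (-r) < 1 := by rw [Real.exp_lt_one_iff]; linarith
  have hε : 0 < ε := lt_min (by norm_num) (by linarith)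
  have hε4 : ε ≤ 1/4 := min_le_left _ _
  have hεr : ε ≤ (1 - Real.exp (-r))/2 := min_le_right _ _
  have hε1 : ε ≤ 1 := hε4.trans (by norm_num)
  set K : ℝ := 2 + 4*ε with hKdef
  have hKpos : 0 < K := by positivity
  set vb : ENNReal := volume (Metric.ball (0 : EuclideanSpace ℝ (Fin n)) 1) with hvb
  have hvb0 : vb ≠ 0 := (Metric.measure_ball_pos volume _ one_pos).ne'
  have hvbtop : vb ≠ ⊤ := measure_ball_lt_top.ne
  refine ⟨vb.toReal * (ε^n / K^n), ?_, ?_⟩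
  · have : 0 < vb.toReal := ENNReal.toReal_pos hvb0 hvbtop
    positivity
  intro Ω hΩ x hx
  set s : Set (EuclideanSpace ℝ (Fin n)) := (fun z => z - x) '' Ω with hs
  set C : Set (EuclideanSpace ℝ (Fin n)) := {w | w ∈ s ∧ -w ∈ s} with hC
  have hsopen : IsOpen s := shift_isOpen hΩ.1 x
  have hCopen : IsOpen C := by
    have : C = s ∩ (Neg.neg ⁻¹' s) := rfl
    rw [this]
    exact hsopen.inter (hsopen.preimage continuous_neg)
  have h0C : (0 : EuclideanSpace ℝ (Fin n)) ∈ C := by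
    constructor <;> simpa [hs] using shift_mem_zero hx
  have hCbdd : IsBounded C := (shift_bounded hΩ.2.2.1 x).subset fun w hw => hw.1
  set m : ENNReal := volume C with hm
  have hm0 : m ≠ 0 := (hCopen.measure_pos volume ⟨0, h0C⟩).ne'
  have hmtop : m ≠ ⊤ := hCbdd.measure_lt_top.ne
  set B : Set (EuclideanSpace ℝ (Fin n)) := (fun w => x + ε • w) '' C with hB
  have hBsub : B ⊆ hilbertBall Ω x r := by
    rintro _ ⟨u, hu, rfl⟩
    exact smul_mem_hilbertBall hΩ hx hr hε hε4 hεr hu.1 hu.2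
  have hBeq : B = (fun z => -x + z) ⁻¹' (ε • C) := by
    ext z
    constructor
    · rintro ⟨u, hu, rfl⟩
      show -x + (x + ε • u) ∈ ε • C
      have : -x + (x + ε • u) = ε • u := by abel
      rw [this]
      exact smul_mem_smul_set hu
    · rintro ⟨u, hu, huz⟩
      refine ⟨u, hu, ?_⟩
      have h2 : ε • u = -x + z := huz
      show x + ε • u = z
      rw [h2]; abel
  have hBopen : IsOpen B := by
    rw [hBeq]
    exact (hCopen.smul₀ hε.ne').preimage (continuous_const.add continuous_id)
  have hBvol : volume B = ENNReal.ofReal (ε^n) * m := by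
    rw [hBeq, measure_preimage_add, Measure.addHaar_smul_of_nonneg volume hε.le,
      finrank_euclideanSpace_fin]
  -- density lower bound on B
  set c : ENNReal := vb / (ENNReal.ofReal (K^n) * m) with hc
  have hdens : ∀ y ∈ B, c ≤ busemannDensity Ω y := by
    rintro _ ⟨u, hu, rfl⟩
    have hsub := finslerBall_subset hΩ hx hε hε1 hu.1 hu.2
    have hvol : volume (finslerBall Ω (x + ε • u)) ≤ ENNReal.ofReal (K^n) * m := by
      calc volume (finslerBall Ω (x + ε • u)) ≤ volume (K • C) := measure_mono hsub
        _ = ENNReal.ofReal (K^n) * m := by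
            rw [Measure.addHaar_smul_of_nonneg volume hKpos.le, finrank_euclideanSpace_fin]
    exact ENNReal.div_le_div_left hvol vb
  -- integral bound
  have hint : c * volume B ≤ busemannVolume Ω (hilbertBall Ω x r) := by
    calc c * volume B = ∫⁻ _ in B, c := (setLIntegral_const B c).symm
      _ ≤ ∫⁻ y in B, busemannDensity Ω y := setLIntegral_mono' hBopen.measurableSet hdens
      _ ≤ ∫⁻ y in hilbertBall Ω x r, busemannDensity Ω y :=
          lintegral_mono' (Measure.restrict_mono hBsub le_rfl) le_rfl
  refine le_trans ?_ hint
  -- arithmetic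
  set Kn : ENNReal := ENNReal.ofReal (K^n) with hKn
  set En : ENNReal := ENNReal.ofReal (ε^n) with hEn
  have hKn0 : Kn ≠ 0 := by
    rw [hKn]; simp only [ne_eq, ENNReal.ofReal_eq_zero, not_le]; positivity
  have hKntop : Kn ≠ ⊤ := ENNReal.ofReal_ne_top
  have harith : c * volume B = vb * En / Kn := by
    rw [hBvol, hc]
    rw [div_eq_mul_inv, ENNReal.mul_inv (Or.inl hKn0) (Or.inl hKntop)]
    calc vb * (Kn⁻¹ * m⁻¹) * (En * m) = vb * Kn⁻¹ * En * (m⁻¹ * m) := by ring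
      _ = vb * Kn⁻¹ * En := by rw [ENNReal.inv_mul_cancel hm0 hmtop, mul_one]
      _ = vb * En / Kn := by rw [div_eq_mul_inv]; ring
  rw [harith]
  have : ENNReal.ofReal (vb.toReal * (ε^n / K^n)) = vb * (En / Kn) := by
    rw [ENNReal.ofReal_mul ENNReal.toReal_nonneg, ENNReal.ofReal_toReal hvbtop,
      ENNReal.ofReal_div_of_pos (by positivity), ← hEn, ← hKn]
  rw [this, mul_div_assoc]
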